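/- Let G be a finite simple graph, ψ : V_G → (finite subsets of K), S an induced subgraph of G, and ψ_S the restriction of ψ. Then the ψ_S-graphical arrangement A_{S,ψ_S} is a localization of A_{G,ψ}: there exists X in the intersection lattice L(A_{G,ψ}) with A_{S,ψ_S} = {H ∈ A_{G,ψ} : H ⊇ X}. -/

import Mathlib

variable {ℓ : ℕ} {K : Type*} [Field K]

/-- The coordinate function on `K^{Option (Fin ℓ)}`; `none` indexes the coordinate `z`
and `some i` the coordinate `x_i`. -/
def coordFn (w : Option (Fin ℓ)) : (Option (Fin ℓ) → K) →ₗ[K] K := LinearMap.proj w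

/-- The hyperplanes of the ψ-graphical arrangement `A_{G,ψ}` in `K^{ℓ+1}`:
`{z = 0}`, `{x_s − x_t = 0}` for edges `{s,t} ∈ E_G`, `{x_i = a z}` for `a ∈ ψ(i)`. -/
def ArrHyps (G : SimpleGraph (Fin ℓ)) (ψ : Fin ℓ → Finset K) :
    Set (Submodule K (Option (Fin ℓ) → K)) :=
  {LinearMap.ker (coordFn none)} ∪
    {H | ∃ s t, G.Adj s t ∧ H = LinearMap.ker (coordFn (some s) - coordFn (some t))} ∪
    {H | ∃ i a, a ∈ ψ i ∧ H = LinearMap.ker (coordFn (some i) - a • coordFn none)}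

/-- The hyperplanes of `A_{S,ψ_S}` for the subgraph `S` of `G` induced on `s`. -/
def ArrHypsInduced (G : SimpleGraph (Fin ℓ)) (ψ : Fin ℓ → Finset K) (s : Finset (Fin ℓ)) :
    Set (Submodule K (Option (Fin ℓ) → K)) :=
  {LinearMap.ker (coordFn none)} ∪
    {H | ∃ a b, a ∈ s ∧ b ∈ s ∧ G.Adj a b ∧
      H = LinearMap.ker (coordFn (some a) - coordFn (some b))} ∪
    {H | ∃ i a, i ∈ s ∧ a ∈ ψ i ∧ H = LinearMap.ker (coordFn (some i) - a • coordFn none)}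

/-- `A_{S,ψ_S}` is a localization of `A_{G,ψ}`: it equals `{H ∈ A_{G,ψ} : H ⊇ X}` for
some `X` in the intersection lattice of `A_{G,ψ}`. -/
lemma induced_subset (G : SimpleGraph (Fin ℓ)) (ψ : Fin ℓ → Finset K)
    (s : Finset (Fin ℓ)) : ArrHypsInduced G ψ s ⊆ ArrHyps G ψ := by
  intro H hH
  rcases hH with (h | ⟨a, b, _, _, hab, hH⟩) | ⟨i, a, _, ha, hH⟩
  · exact Or.inl (Or.inl h)
  · exact Or.inl (Or.inr ⟨a, b, hab, hH⟩)
  · exact Or.inr ⟨i, a, ha, hH⟩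

theorem stmt15 [Infinite K] (G : SimpleGraph (Fin ℓ)) (ψ : Fin ℓ → Finset K)
    (s : Finset (Fin ℓ)) :
    ∃ B ⊆ ArrHyps G ψ,
      {H ∈ ArrHyps G ψ | sInf B ≤ H} = ArrHypsInduced G ψ s := by
  classical
  set e := Infinite.natEmbedding K with he
  set v : Option (Fin ℓ) → K := fun w =>
    match w with
    | none => 0
    | some i => if i ∈ s then 0 else e ((i : ℕ) + 1) - e 0
    with hv
  have hcoord : ∀ w, coordFn w v = v w := fun w => rfl
  have hvmem : v ∈ sInf (ArrHypsInduced G ψ s) := by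
    rw [Submodule.mem_sInf]
    intro p hp
    rcases hp with (h | ⟨a, b, has, hbs, hab, hH⟩) | ⟨i, a, his, ha, hH⟩
    · rw [Set.mem_singleton_iff] at h
      subst h; simp [LinearMap.mem_ker, hcoord, hv, coordFn]
    · subst hH
      simp [LinearMap.mem_ker, hcoord, hv, has, hbs, coordFn]
    · subst hH
      simp [LinearMap.mem_ker, hcoord, hv, his, coordFn]
  refine ⟨ArrHypsInduced G ψ s, induced_subset G ψ s, ?_⟩
  ext H
  simp only [Set.mem_setOf_eq]
  constructor
  · rintro ⟨hH, hle⟩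
    have hvH : v ∈ H := hle hvmem
    rcases hH with (h | ⟨a, b, hab, hH⟩) | ⟨i, a, ha, hH⟩
    · exact Or.inl (Or.inl h)
    · by_cases hs : a ∈ s ∧ b ∈ s
      · exact Or.inl (Or.inr ⟨a, b, hs.1, hs.2, hab, hH⟩)
      · exfalso
        subst hH
        rw [LinearMap.mem_ker, LinearMap.sub_apply, hcoord, hcoord, sub_eq_zero] at hvH
        have hne : a ≠ b := hab.ne
        simp only [hv] at hvH
        rcases not_and_or.mp hs with has | hbs
        · rw [if_neg has] at hvH
          by_cases hbs' : b ∈ s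
          · rw [if_pos hbs'] at hvH
            exact absurd (e.injective (sub_eq_zero.mp hvH)) (by omega)
          · rw [if_neg hbs'] at hvH
            have := e.injective (sub_left_inj.mp hvH)
            exact hne (Fin.val_injective (by omega))
        · rw [if_neg hbs] at hvH
          by_cases has' : a ∈ s
          · rw [if_pos has'] at hvH
            exact absurd (e.injective (sub_eq_zero.mp hvH.symm)) (by omega)
          · rw [if_neg has'] at hvH
            have := e.injective (sub_left_inj.mp hvH)
            exact hne (Fin.val_injective (by omega))
    · by_cases his : i ∈ s
      · exact Or.inr ⟨i, a, his, ha, hH⟩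
      · exfalso
        subst hH
        rw [LinearMap.mem_ker, LinearMap.sub_apply, LinearMap.smul_apply, hcoord, hcoord,
          smul_eq_mul, sub_eq_zero] at hvH
        simp only [hv, if_neg his, mul_zero] at hvH
        exact absurd (e.injective (sub_eq_zero.mp hvH)) (by omega)
  · intro hH
    exact ⟨induced_subset G ψ s hH, sInf_le hH⟩
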